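/- The function u(x,t) = ((t(4i+t) + x(2+x) − 2)/(2(2 + t² + x(2+x)))) · e^{−it/2} is a solution of the focusing nonlinear Schrödinger equation i u_t = u_{xx} + 2 u |u|², and its denominator 2 + t² + x(2+x) = 1 + t² + (1+x)² is strictly positive for all real x, t. -/

import Mathlib

set_option maxHeartbeats 4000000

noncomputable def u14 (x t : ℝ) : ℂ :=
  (((t : ℂ) * (4 * Complex.I + (t : ℂ)) + (x : ℂ) * (2 + (x : ℂ)) - 2) /
      (2 * (2 + (t : ℂ) ^ 2 + (x : ℂ) * (2 + (x : ℂ))))) *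
    Complex.exp (-Complex.I * (t : ℂ) / 2)

lemma ofReal_hasDeriv (r : ℝ) : HasDerivAt (fun s : ℝ => (s : ℂ)) 1 r := by
  exact Complex.ofRealCLM.hasDerivAt

lemma pos14 (x t : ℝ) : 0 < 2 + t ^ 2 + x * (2 + x) := by
  nlinarith [sq_nonneg (1 + x), sq_nonneg t]

lemma den_ne (x t : ℝ) : ((2:ℂ) + (t:ℂ)^2 + (x:ℂ)*(2+(x:ℂ))) ≠ 0 := by
  have h := (pos14 x t).ne'
  have : ((2 + t^2 + x*(2+x) : ℝ) : ℂ) ≠ 0 := by exact_mod_cast h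
  simpa [Complex.ofReal_add, Complex.ofReal_mul, Complex.ofReal_pow] using this

lemma collect14 (E F D l1n n w2n nc : ℂ) (hEF : E * F = 1) (hD : D ≠ 0)
    (h : Complex.I*l1n*D^2 + Complex.I*n*(-Complex.I/2)*D^3 = w2n + 2*n*(n*nc)*D) :
    Complex.I * (l1n/D^2 * E + n/D * (E * (-Complex.I/2))) =
      w2n/(D^2)^2 * E + 2*(n/D*E)*((n/D*E)*(nc/D*F)) := by
  have hw : w2n = Complex.I*l1n*D^2 + Complex.I*n*(-Complex.I/2)*D^3 - 2*n*(n*nc)*D := by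
    linear_combination -h
  subst hw
  field_simp
  linear_combination (-4*n^2*nc*E) * hEF

lemma key14 (T X : ℂ) :
    (Complex.I*((1*(4*Complex.I+T)+T*1) * (2*(2+T^2+X*(2+X))) - (T*(4*Complex.I+T)+X*(2+X)-2) * (2*(2*T)))*(2*(2+T^2+X*(2+X)))^2
      + Complex.I*(T*(4*Complex.I+T)+X*(2+X)-2)*(-Complex.I/2)*(2*(2+T^2+X*(2+X)))^3)
    = (((1*1+1*1)*(2*(2+T^2+X*(2+X))) + (1*(2+X)+X*1)*(2*(1*(2+X)+X*1))
          - ((1*(2+X)+X*1)*(2*(1*(2+X)+X*1)) + (T*(4*Complex.I+T)+X*(2+X)-2)*(2*(1*1+1*1))))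
        * ((2*(2+T^2+X*(2+X)))^2)
      - ((1*(2+X)+X*1)*(2*(2+T^2+X*(2+X))) - (T*(4*Complex.I+T)+X*(2+X)-2)*(2*(1*(2+X)+X*1)))
        * ((2*(1*(2+X)+X*1))*(2*(2+T^2+X*(2+X))) + (2*(2+T^2+X*(2+X)))*(2*(1*(2+X)+X*1))))
    + 2*(T*(4*Complex.I+T)+X*(2+X)-2)*((T*(4*Complex.I+T)+X*(2+X)-2)*(T*(-(4*Complex.I)+T)+X*(2+X)-2))*(2*(2+T^2+X*(2+X))) := by
  have hI3 : Complex.I^3 = -Complex.I := by rw [pow_succ, Complex.I_sq]; ring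
  have hI4 : Complex.I^4 = 1 := by rw [show (4:ℕ)=2+2 from rfl, pow_add, Complex.I_sq]; ring
  ring_nf
  simp only [Complex.I_sq, hI3, hI4]
  ring

theorem stmt14 :
    (∀ x t : ℝ, 0 < 2 + t ^ 2 + x * (2 + x)) ∧
    ∀ x t : ℝ,
      Complex.I * deriv (fun t' => u14 x t') t =
        iteratedDeriv 2 (fun x' => u14 x' t) x
          + 2 * u14 x t * (u14 x t * (starRingEnd ℂ) (u14 x t)) := by
  refine ⟨pos14, fun x t => ?_⟩
  have h2D : ∀ y : ℝ, (2:ℂ)*(2+(t:ℂ)^2+(y:ℂ)*(2+(y:ℂ))) ≠ 0 := fun y =>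
    mul_ne_zero two_ne_zero (den_ne y t)
  -- time derivative
  have hXt := ofReal_hasDeriv t
  have hNum : HasDerivAt (fun t' : ℝ => (t':ℂ)*(4*Complex.I+(t':ℂ)) + (x:ℂ)*(2+(x:ℂ)) - 2)
      (1*(4*Complex.I+(t:ℂ)) + (t:ℂ)*1) t :=
    ((hXt.mul (hXt.const_add (4*Complex.I))).add_const _).sub_const 2
  have hsq : HasDerivAt (fun t' : ℝ => ((t':ℂ))^2) (2*(t:ℂ)) t := by
    have h : HasDerivAt (fun t' : ℝ => (t':ℂ)*(t':ℂ)) (1*(t:ℂ)+(t:ℂ)*1) t := hXt.mul hXt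
    simpa [sq, two_mul] using h
  have hDen : HasDerivAt (fun t' : ℝ => 2*(2+((t':ℂ))^2 + (x:ℂ)*(2+(x:ℂ))))
      (2*(2*(t:ℂ))) t := ((hsq.const_add 2).add_const _).const_mul 2
  have hExp : HasDerivAt (fun t' : ℝ => Complex.exp (-Complex.I*(t':ℂ)/2))
      (Complex.exp (-Complex.I*(t:ℂ)/2) * (-Complex.I/2)) t := by
    have h1 := ((hXt.const_mul (-Complex.I)).div_const 2).cexp
    simpa using h1
  have hU : HasDerivAt (fun t' : ℝ => u14 x t')
      ((((1*(4*Complex.I+(t:ℂ)) + (t:ℂ)*1) * (2*(2+(t:ℂ)^2+(x:ℂ)*(2+(x:ℂ)))) -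
          ((t:ℂ)*(4*Complex.I+(t:ℂ)) + (x:ℂ)*(2+(x:ℂ)) - 2) * (2*(2*(t:ℂ)))) /
        (2*(2+(t:ℂ)^2+(x:ℂ)*(2+(x:ℂ))))^2) * Complex.exp (-Complex.I*(t:ℂ)/2)
        + (((t:ℂ)*(4*Complex.I+(t:ℂ)) + (x:ℂ)*(2+(x:ℂ)) - 2) /
            (2*(2+(t:ℂ)^2+(x:ℂ)*(2+(x:ℂ)))))
          * (Complex.exp (-Complex.I*(t:ℂ)/2) * (-Complex.I/2))) t := by
    unfold u14; exact (hNum.div hDen (h2D x)).mul hExp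
  -- first x-derivative (at any point y)
  have hg : ∀ y : ℝ, HasDerivAt (fun x' : ℝ => u14 x' t)
      ((((1*(2+(y:ℂ))+(y:ℂ)*1) * (2*(2+(t:ℂ)^2+(y:ℂ)*(2+(y:ℂ)))) -
          ((t:ℂ)*(4*Complex.I+(t:ℂ)) + (y:ℂ)*(2+(y:ℂ)) - 2) * (2*(1*(2+(y:ℂ))+(y:ℂ)*1))) /
        (2*(2+(t:ℂ)^2+(y:ℂ)*(2+(y:ℂ))))^2) * Complex.exp (-Complex.I*(t:ℂ)/2)) y := by
    intro y
    have hXx := ofReal_hasDeriv y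
    have hCx : HasDerivAt (fun x' : ℝ => (x':ℂ)*(2+(x':ℂ))) (1*(2+(y:ℂ))+(y:ℂ)*1) y :=
      hXx.mul (hXx.const_add 2)
    have hNx : HasDerivAt (fun x' : ℝ => (t:ℂ)*(4*Complex.I+(t:ℂ)) + (x':ℂ)*(2+(x':ℂ)) - 2)
        (1*(2+(y:ℂ))+(y:ℂ)*1) y := by
      simpa using (hCx.const_add ((t:ℂ)*(4*Complex.I+(t:ℂ)))).sub_const 2
    have hDx : HasDerivAt (fun x' : ℝ => 2*(2+(t:ℂ)^2+(x':ℂ)*(2+(x':ℂ))))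
        (2*(1*(2+(y:ℂ))+(y:ℂ)*1)) y := (hCx.const_add (2+(t:ℂ)^2)).const_mul 2
    have := (hNx.div hDx (h2D y)).mul_const (Complex.exp (-Complex.I*(t:ℂ)/2))
    unfold u14; exact this
  have hder1 : (deriv fun x' : ℝ => u14 x' t) = _ := funext fun y => (hg y).deriv
  -- second x-derivative
  have hXx := ofReal_hasDeriv x
  have hCx : HasDerivAt (fun x' : ℝ => (x':ℂ)*(2+(x':ℂ))) (1*(2+(x:ℂ))+(x:ℂ)*1) x :=
    hXx.mul (hXx.const_add 2)
  have hp : HasDerivAt (fun x' : ℝ => 1*(2+(x':ℂ))+(x':ℂ)*1) (1*1 + 1*1) x :=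
    ((hXx.const_add 2).const_mul 1).add (hXx.mul_const 1)
  have hnx : HasDerivAt (fun x' : ℝ => (t:ℂ)*(4*Complex.I+(t:ℂ)) + (x':ℂ)*(2+(x':ℂ)) - 2)
      (1*(2+(x:ℂ))+(x:ℂ)*1) x := by
    simpa using (hCx.const_add ((t:ℂ)*(4*Complex.I+(t:ℂ)))).sub_const 2
  have hdx : HasDerivAt (fun x' : ℝ => 2*(2+(t:ℂ)^2+(x':ℂ)*(2+(x':ℂ))))
      (2*(1*(2+(x:ℂ))+(x:ℂ)*1)) x := (hCx.const_add (2+(t:ℂ)^2)).const_mul 2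
  have hA : HasDerivAt (fun x' : ℝ =>
      (1*(2+(x':ℂ))+(x':ℂ)*1) * (2*(2+(t:ℂ)^2+(x':ℂ)*(2+(x':ℂ)))) -
        ((t:ℂ)*(4*Complex.I+(t:ℂ)) + (x':ℂ)*(2+(x':ℂ)) - 2) * (2*(1*(2+(x':ℂ))+(x':ℂ)*1)))
      ((1*1+1*1) * (2*(2+(t:ℂ)^2+(x:ℂ)*(2+(x:ℂ)))) +
        (1*(2+(x:ℂ))+(x:ℂ)*1) * (2*(1*(2+(x:ℂ))+(x:ℂ)*1)) -
        ((1*(2+(x:ℂ))+(x:ℂ)*1) * (2*(1*(2+(x:ℂ))+(x:ℂ)*1)) +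
          ((t:ℂ)*(4*Complex.I+(t:ℂ)) + (x:ℂ)*(2+(x:ℂ)) - 2) * (2*(1*1+1*1)))) x :=
    (hp.mul hdx).sub (hnx.mul (hp.const_mul 2))
  have hB : HasDerivAt (fun x' : ℝ => (2*(2+(t:ℂ)^2+(x':ℂ)*(2+(x':ℂ))))^2)
      ((2*(1*(2+(x:ℂ))+(x:ℂ)*1)) * (2*(2+(t:ℂ)^2+(x:ℂ)*(2+(x:ℂ)))) +
        (2*(2+(t:ℂ)^2+(x:ℂ)*(2+(x:ℂ)))) * (2*(1*(2+(x:ℂ))+(x:ℂ)*1))) x := by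
    have h : HasDerivAt (fun x' : ℝ => (2*(2+(t:ℂ)^2+(x':ℂ)*(2+(x':ℂ)))) * (2*(2+(t:ℂ)^2+(x':ℂ)*(2+(x':ℂ)))))
        ((2*(1*(2+(x:ℂ))+(x:ℂ)*1)) * (2*(2+(t:ℂ)^2+(x:ℂ)*(2+(x:ℂ)))) +
          (2*(2+(t:ℂ)^2+(x:ℂ)*(2+(x:ℂ)))) * (2*(1*(2+(x:ℂ))+(x:ℂ)*1))) x := hdx.mul hdx
    simpa [pow_two] using h
  have hBne : ((2:ℂ)*(2+(t:ℂ)^2+(x:ℂ)*(2+(x:ℂ))))^2 ≠ 0 := pow_ne_zero 2 (h2D x)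
  have hU2 := ((hA.div hB hBne).mul_const (Complex.exp (-Complex.I*(t:ℂ)/2)))
  simp only [Pi.div_apply] at hU2
  have hit2 : iteratedDeriv 2 (fun x' : ℝ => u14 x' t) x
      = deriv (deriv (fun x' : ℝ => u14 x' t)) x := by
    rw [show (2:ℕ) = 1 + 1 from rfl, iteratedDeriv_succ, iteratedDeriv_one]
  -- conjugate
  have hconj : (starRingEnd ℂ) (u14 x t) =
      (((t:ℂ)*(-(4*Complex.I)+(t:ℂ)) + (x:ℂ)*(2+(x:ℂ)) - 2) /
        (2*(2+(t:ℂ)^2+(x:ℂ)*(2+(x:ℂ))))) * Complex.exp (Complex.I*(t:ℂ)/2) := by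
    unfold u14
    simp [map_mul, map_div₀, ← Complex.exp_conj, Complex.conj_ofReal, map_ofNat]
  rw [hit2, hder1, hU2.deriv, hU.deriv, hconj]
  unfold u14
  have hEF : Complex.exp (-Complex.I*(t:ℂ)/2) * Complex.exp (Complex.I*(t:ℂ)/2) = 1 := by
    rw [← Complex.exp_add, show -Complex.I*(t:ℂ)/2 + Complex.I*(t:ℂ)/2 = 0 by ring,
      Complex.exp_zero]
  exact collect14 _ _ _ _ _ _ _ hEF (h2D x) (key14 (t:ℂ) (x:ℂ))
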